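/- Every configuration reachable from the initial configuration under SSPM transitions is unimodal: there exists an index j such that the configuration is nondecreasing on indices ≤ j and nonincreasing on indices ≥ j. -/

import Mathlib

/-- Initial configuration: `n` grains at position 0. -/
def initConf (n : ℕ) : ℤ → ℕ := fun i => if i = 0 then n else 0

/-- Move one grain from column `i` to column `j`. -/
def moveGrain (a : ℤ → ℕ) (i j : ℤ) : ℤ → ℕ :=
  fun k => if k = i then a k - 1 else if k = j then a k + 1 else a k

/-- One sequential SSPM step. -/
def sspmStep (a b : ℤ → ℕ) : Prop :=
  ∃ i : ℤ, (a (i + 1) + 2 ≤ a i ∧ b = moveGrain a i (i + 1)) ∨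
           (a (i - 1) + 2 ≤ a i ∧ b = moveGrain a i (i - 1))

/-- Left rule applicable at column `i`. -/
def appL (a : ℤ → ℕ) (i : ℤ) : Prop := a (i - 1) + 2 ≤ a i

/-- Right rule applicable at column `i`. -/
def appR (a : ℤ → ℕ) (i : ℤ) : Prop := a (i + 1) + 2 ≤ a i

/-- A choice function for a parallel step: `some false` = fire left,
`some true` = fire right, `none` = not fired.  Every column on which some
rule applies must fire. -/
def ValidChoice (a : ℤ → ℕ) (d : ℤ → Option Bool) : Prop :=
  ∀ i : ℤ, (d i = some false → appL a i) ∧ (d i = some true → appR a i) ∧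
    (d i = none → ¬ appL a i ∧ ¬ appR a i)

/-- The configuration resulting from firing all columns according to `d`. -/
def psspmResult (a : ℤ → ℕ) (d : ℤ → Option Bool) : ℤ → ℕ :=
  fun i => (a i - (if d i = none then 0 else 1))
    + (if d (i - 1) = some true then 1 else 0)
    + (if d (i + 1) = some false then 1 else 0)

/-- One parallel PSSPM step. -/
def psspmStep (a b : ℤ → ℕ) : Prop :=
  ∃ d : ℤ → Option Bool, ValidChoice a d ∧ b = psspmResult a d

/-- Reachability: reflexive transitive closure of a step relation. -/
def Reaches (step : (ℤ → ℕ) → (ℤ → ℕ) → Prop) : (ℤ → ℕ) → (ℤ → ℕ) → Prop :=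
  Relation.ReflTransGen step

/-- Fixed point: no rule applies anywhere. -/
def IsFixed (c : ℤ → ℕ) : Prop :=
  ∀ i : ℤ, c i ≤ c (i + 1) + 1 ∧ c i ≤ c (i - 1) + 1

/-- Unimodal configuration: nondecreasing up to some index, nonincreasing after. -/
def Unimodal (c : ℤ → ℕ) : Prop :=
  ∃ j : ℤ, (∀ i k : ℤ, i ≤ k → k ≤ j → c i ≤ c k) ∧
           (∀ i k : ℤ, j ≤ i → i ≤ k → c k ≤ c i)

/-- Strict lexicographic order, reading positions from left to right. -/
def lexLt (a b : ℤ → ℕ) : Prop :=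
  ∃ i : ℤ, a i < b i ∧ ∀ k : ℤ, k < i → a k = b k

/-- Lexicographic order. -/
def lexLe (a b : ℤ → ℕ) : Prop := a = b ∨ lexLt a b

/-- `closeStar a b` (a ◁* b): the nonzero entries of `a - b`, read from left
to right, form a concatenation of pairs (−1 then +1), recorded by an ordered
list of index pairs. -/
def closeStar (a b : ℤ → ℕ) : Prop :=
  ∃ l : List (ℤ × ℤ),
    (∀ p ∈ l, p.1 < p.2) ∧
    l.Chain' (fun p q => p.2 < q.1) ∧
    ∀ i : ℤ, (a i : ℤ) - (b i : ℤ) =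
      (if i ∈ l.map Prod.snd then 1 else 0) - (if i ∈ l.map Prod.fst then 1 else 0)

/-- `closeRel a b` (a ◁ b): `a - b` is exactly −1 at some index `i` and +1 at
some index `j > i`, and 0 elsewhere. -/
def closeRel (a b : ℤ → ℕ) : Prop :=
  ∃ i j : ℤ, i < j ∧ ((a i : ℤ) = (b i : ℤ) - 1) ∧ (a j = b j + 1) ∧
    ∀ k : ℤ, k ≠ i → k ≠ j → a k = b k

def AdjUni (c : ℤ → ℕ) : Prop :=
  ∃ j : ℤ, (∀ i : ℤ, i < j → c i ≤ c (i + 1)) ∧ (∀ i : ℤ, j ≤ i → c (i + 1) ≤ c i)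

lemma adjUni_unimodal {c : ℤ → ℕ} (h : AdjUni c) : Unimodal c := by
  obtain ⟨j, H1, H2⟩ := h
  refine ⟨j, ?_, ?_⟩
  · intro i k hik hkj
    have key := Int.le_induction (m := i) (motive := fun m _ => m ≤ j → c i ≤ c m)
      (fun _ => le_refl _)
      (fun m hm ih hmj => le_trans (ih (by omega)) (H1 m (by omega)))
    exact key k hik hkj
  · intro i k hji hik
    have key := Int.le_induction (m := i) (motive := fun m _ => c m ≤ c i)
      (le_refl _)
      (fun m hm ih => le_trans (H2 m (by omega)) ih)
    exact key k hik

lemma adjUni_init (n : ℕ) : AdjUni (initConf n) := by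
  refine ⟨0, ?_, ?_⟩
  · intro i hi
    simp only [initConf]
    rw [if_neg (by omega)]
    exact Nat.zero_le _
  · intro i hi
    simp only [initConf]
    rw [if_neg (by omega)]
    exact Nat.zero_le _

lemma adjUni_step {a b : ℤ → ℕ} (ha : AdjUni a) (hs : sspmStep a b) : AdjUni b := by
  obtain ⟨j, H1, H2⟩ := ha
  obtain ⟨i, ⟨hge, rfl⟩ | ⟨hge, rfl⟩⟩ := hs
  · -- right fire at i
    have hji : j ≤ i := by
      by_contra h
      have := H1 i (by omega)
      omega
    rcases eq_or_lt_of_le hji with rfl | hlt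
    · -- fire at the peak j
      by_cases hc : a (j - 1) + 1 ≤ a j
      · -- keep peak j
        refine ⟨j, ?_, ?_⟩
        · intro k hk
          simp only [moveGrain]
          rcases eq_or_ne k (j - 1) with rfl | h1
          · rw [show (j : ℤ) - 1 + 1 = j from by omega, if_neg (by omega),
              if_neg (by omega), if_pos rfl]
            omega
          · rw [if_neg (by omega), if_neg (by omega), if_neg (by omega),
              if_neg (by omega)]
            exact H1 k hk
        · intro k hk
          simp only [moveGrain]
          rcases eq_or_ne k j with rfl | h1
          · rw [if_neg (by omega), if_pos rfl, if_pos rfl]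
            omega
          · rcases eq_or_ne k (j + 1) with rfl | h2
            · have h2k := H2 (j + 1) (by omega)
              rw [if_neg (by omega), if_neg (by omega), if_neg (by omega),
                if_pos rfl]
              omega
            · rw [if_neg (by omega), if_neg (by omega), if_neg (by omega),
                if_neg (by omega)]
              exact H2 k hk
      · -- a j ≤ a (j-1) : new peak j - 1
        refine ⟨j - 1, ?_, ?_⟩
        · intro k hk
          simp only [moveGrain]
          rw [if_neg (by omega), if_neg (by omega), if_neg (by omega),
            if_neg (by omega)]
          exact H1 k (by omega)
        · intro k hk
          simp only [moveGrain]
          rcases eq_or_ne k (j - 1) with rfl | h1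
          · rw [show (j : ℤ) - 1 + 1 = j from by omega, if_pos rfl,
              if_neg (by omega), if_neg (by omega)]
            omega
          · rcases eq_or_ne k j with rfl | h2
            · rw [if_neg (by omega), if_pos rfl, if_pos rfl]
              omega
            · rcases eq_or_ne k (j + 1) with rfl | h3
              · have h2k := H2 (j + 1) (by omega)
                rw [if_neg (by omega), if_neg (by omega), if_neg (by omega),
                  if_pos rfl]
                omega
              · rw [if_neg (by omega), if_neg (by omega), if_neg (by omega),
                  if_neg (by omega)]
                exact H2 k (by omega)
    · -- j < i : keep peak j
      refine ⟨j, ?_, ?_⟩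
      · intro k hk
        simp only [moveGrain]
        rw [if_neg (by omega), if_neg (by omega), if_neg (by omega),
          if_neg (by omega)]
        exact H1 k hk
      · intro k hk
        simp only [moveGrain]
        rcases eq_or_ne k (i - 1) with rfl | h1
        · have h2k : a i ≤ a (i - 1) := by
            have := H2 (i - 1) (by omega)
            rw [show i - 1 + 1 = i from by omega] at this
            exact this
          rw [show i - 1 + 1 = i from by omega, if_pos rfl, if_neg (by omega),
            if_neg (by omega)]
          omega
        · rcases eq_or_ne k i with rfl | h2
          · rw [if_neg (by omega), if_pos rfl, if_pos rfl]
            omega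
          · rcases eq_or_ne k (i + 1) with rfl | h3
            · have h2k := H2 (i + 1) (by omega)
              rw [if_neg (by omega), if_neg (by omega), if_neg (by omega),
                if_pos rfl]
              omega
            · rw [if_neg (by omega), if_neg (by omega), if_neg (by omega),
                if_neg (by omega)]
              exact H2 k hk
  · -- left fire at i
    have hij : i ≤ j := by
      by_contra h
      have h2 := H2 (i - 1) (by omega)
      rw [show i - 1 + 1 = i from by omega] at h2
      omega
    rcases eq_or_lt_of_le hij with rfl | hlt
    · -- fire at the peak i
      by_cases hc : a (i + 1) + 1 ≤ a i
      · -- keep peak i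
        refine ⟨i, ?_, ?_⟩
        · intro k hk
          simp only [moveGrain]
          rcases eq_or_ne k (i - 1) with rfl | h1
          · rw [show (i : ℤ) - 1 + 1 = i from by omega, if_neg (by omega),
              if_pos rfl, if_pos rfl]
            omega
          · rcases eq_or_ne k (i - 2) with rfl | h2
            · have h1k : a (i - 2) ≤ a (i - 1) := by
                have := H1 (i - 2) (by omega)
                rw [show i - 2 + 1 = i - 1 from by omega] at this
                exact this
              rw [show (i : ℤ) - 2 + 1 = i - 1 from by omega, if_neg (by omega),
                if_neg (by omega), if_neg (by omega), if_pos rfl]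
              omega
            · rw [if_neg (by omega), if_neg (by omega), if_neg (by omega),
                if_neg (by omega)]
              exact H1 k hk
        · intro k hk
          simp only [moveGrain]
          rcases eq_or_ne k i with rfl | h1
          · rw [if_neg (by omega), if_neg (by omega), if_pos rfl]
            omega
          · rw [if_neg (by omega), if_neg (by omega), if_neg (by omega),
              if_neg (by omega)]
            exact H2 k hk
      · -- a i ≤ a (i+1) : new peak i + 1
        refine ⟨i + 1, ?_, ?_⟩
        · intro k hk
          simp only [moveGrain]
          rcases eq_or_ne k i with rfl | h1
          · rw [if_pos rfl, if_neg (by omega), if_neg (by omega)]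
            omega
          · rcases eq_or_ne k (i - 1) with rfl | h2
            · rw [show (i : ℤ) - 1 + 1 = i from by omega, if_neg (by omega),
                if_pos rfl, if_pos rfl]
              omega
            · rcases eq_or_ne k (i - 2) with rfl | h3
              · have h1k : a (i - 2) ≤ a (i - 1) := by
                  have := H1 (i - 2) (by omega)
                  rw [show i - 2 + 1 = i - 1 from by omega] at this
                  exact this
                rw [show (i : ℤ) - 2 + 1 = i - 1 from by omega, if_neg (by omega),
                  if_neg (by omega), if_neg (by omega), if_pos rfl]
                omega
              · rw [if_neg (by omega), if_neg (by omega), if_neg (by omega),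
                  if_neg (by omega)]
                exact H1 k (by omega)
        · intro k hk
          simp only [moveGrain]
          rw [if_neg (by omega), if_neg (by omega), if_neg (by omega),
            if_neg (by omega)]
          exact H2 k (by omega)
    · -- i < j : keep peak j
      refine ⟨j, ?_, ?_⟩
      · intro k hk
        simp only [moveGrain]
        rcases eq_or_ne k (i - 1) with rfl | h1
        · rw [show (i : ℤ) - 1 + 1 = i from by omega, if_neg (by omega),
            if_pos rfl, if_pos rfl]
          omega
        · rcases eq_or_ne k i with rfl | h2
          · have h1k := H1 k (by omega)
            rw [if_pos rfl, if_neg (by omega), if_neg (by omega)]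
            omega
          · rcases eq_or_ne k (i - 2) with rfl | h3
            · have h1k : a (i - 2) ≤ a (i - 1) := by
                have := H1 (i - 2) (by omega)
                rw [show i - 2 + 1 = i - 1 from by omega] at this
                exact this
              rw [show (i : ℤ) - 2 + 1 = i - 1 from by omega, if_neg (by omega),
                if_neg (by omega), if_neg (by omega), if_pos rfl]
              omega
            · rw [if_neg (by omega), if_neg (by omega), if_neg (by omega),
                if_neg (by omega)]
              exact H1 k hk
      · intro k hk
        simp only [moveGrain]
        rw [if_neg (by omega), if_neg (by omega), if_neg (by omega),
          if_neg (by omega)]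
        exact H2 k hk

theorem reachable_sspm_unimodal (n : ℕ) (c : ℤ → ℕ)
    (h : Reaches sspmStep (initConf n) c) :
    Unimodal c := by
  apply adjUni_unimodal
  induction h with
  | refl => exact adjUni_init n
  | tail _ hstep ih => exact adjUni_step ih hstep
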